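/- arXiv:2402.15194 — 8 statements merged into one kernel-verified Lean document; each statement's English description precedes it below -/
import Mathlib

section
/- Let q be a probability measure on a measurable space Ω, let α > 0, and let r : Ω → ℝ be measurable with exp(r/α) q-integrable; set C := ∫ exp(r(x)/α) dq(x) and let p_tar be the measure with density exp(r(·)/α)/C with respect to q. If p is a probability measure absolutely continuous with respect to q, with r p-integrable and KL(p‖q) < ∞, and ∫ r dp − α·KL(p‖q) = α·log C, then p = p_tar. -/
open MeasureTheory
open scoped Classical ENNReal

/-- Kullback–Leibler divergence, as an extended real number: it equals
`∫ log (dp/dq) dp` when `p ≪ q` and this integral is well defined, and `+∞` otherwise. -/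
noncomputable def KL {Ω : Type*} [MeasurableSpace Ω] (p q : Measure Ω) : EReal :=
  if p ≪ q ∧ Integrable (llr p q) p then ((∫ x, llr p q x ∂p : ℝ) : EReal) else ⊤

/-- Equality case of Gibbs' inequality: if `p ≪ ν` are probability measures with
`llr p ν` `p`-integrable and `∫ llr p ν ∂p = 0`, then `p = ν`. -/
lemma gibbs_eq_case {Ω : Type*} [MeasurableSpace Ω] (p ν : Measure Ω)
    [IsProbabilityMeasure p] [IsProbabilityMeasure ν] (hpν : p ≪ ν)
    (hint : Integrable (llr p ν) p) (h0 : ∫ x, llr p ν x ∂p = 0) : p = ν := by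
  set g : Ω → ℝ := fun x => (p.rnDeriv ν x).toReal with hg
  have hg_pos : ∀ᵐ x ∂p, 0 < g x := by
    filter_upwards [Measure.rnDeriv_pos hpν, hpν.ae_le (Measure.rnDeriv_lt_top p ν)]
      with x h1 h2
    exact ENNReal.toReal_pos h1.ne' h2.ne
  -- the inverse of the density is integrable with lintegral ≤ 1
  have hlin : ∫⁻ x, (p.rnDeriv ν x)⁻¹ ∂p ≤ 1 := by
    rw [← lintegral_rnDeriv_mul (f := fun x => (p.rnDeriv ν x)⁻¹) hpν (Measure.measurable_rnDeriv p ν).inv.aemeasurable]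
    calc ∫⁻ x, p.rnDeriv ν x * (p.rnDeriv ν x)⁻¹ ∂ν
        ≤ ∫⁻ _, 1 ∂ν := lintegral_mono fun x => ENNReal.mul_inv_le_one _
      _ = 1 := by simp
  have hinv_eq : ∀ x, (g x)⁻¹ = ((p.rnDeriv ν x)⁻¹).toReal := by
    intro x; rw [ENNReal.toReal_inv]
  have hinv_int : Integrable (fun x => (g x)⁻¹) p := by
    refine ⟨(Measure.measurable_rnDeriv p ν).ennreal_toReal.inv.aestronglyMeasurable, ?_⟩
    rw [hasFiniteIntegral_iff_norm]
    have : ∀ x, ENNReal.ofReal ‖(g x)⁻¹‖ ≤ (p.rnDeriv ν x)⁻¹ := by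
      intro x
      rw [Real.norm_eq_abs, abs_of_nonneg (by positivity), hinv_eq]
      exact ENNReal.ofReal_toReal_le
    exact ((lintegral_mono this).trans hlin).trans_lt ENNReal.one_lt_top
  have hinv_le : ∫ x, (g x)⁻¹ ∂p ≤ 1 := by
    rw [integral_eq_lintegral_of_nonneg_ae (Filter.Eventually.of_forall fun x => by positivity)
      hinv_int.aestronglyMeasurable]
    have hle : ∫⁻ x, ENNReal.ofReal ((g x)⁻¹) ∂p ≤ 1 := by
      refine le_trans (lintegral_mono fun x => ?_) hlin
      rw [hinv_eq]; exact ENNReal.ofReal_toReal_le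
    calc (∫⁻ x, ENNReal.ofReal ((g x)⁻¹) ∂p).toReal ≤ (1 : ℝ≥0∞).toReal :=
          ENNReal.toReal_mono (by simp) hle
      _ = 1 := by simp
  -- the function φ = llr - (1 - g⁻¹) is a.e. nonnegative with integral ≤ 0
  set φ : Ω → ℝ := fun x => llr p ν x - (1 - (g x)⁻¹) with hφ
  have h2int : Integrable (fun x => 1 - (g x)⁻¹) p := by
    exact (integrable_const (1 : ℝ)).sub hinv_int
  have hφ_int : Integrable φ p := hint.sub h2int
  have hφ_nonneg : 0 ≤ᵐ[p] φ := by
    filter_upwards [hg_pos] with x hx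
    have h1 : Real.log (g x)⁻¹ ≤ (g x)⁻¹ - 1 :=
      Real.log_le_sub_one_of_pos (by positivity)
    rw [Real.log_inv] at h1
    simp only [hφ, Pi.zero_apply, llr, hg]
    linarith
  have hφ_zero : ∫ x, φ x ∂p = 0 := by
    have h1 : ∫ x, φ x ∂p ≤ 0 := by
      have : ∫ x, φ x ∂p = ∫ x, llr p ν x ∂p - (1 - ∫ x, (g x)⁻¹ ∂p) := by
        rw [show ∫ x, φ x ∂p = ∫ x, llr p ν x - (1 - (g x)⁻¹) ∂p from rfl,
          integral_sub hint h2int, integral_sub (integrable_const 1) hinv_int, integral_const]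
        simp
      rw [this, h0]; linarith
    exact le_antisymm h1 (integral_nonneg_of_ae hφ_nonneg)
  have hφ_ae : φ =ᵐ[p] 0 := (integral_eq_zero_iff_of_nonneg_ae hφ_nonneg hφ_int).mp hφ_zero
  -- conclude that the density equals 1 a.e.
  have hone : ∀ᵐ x ∂p, p.rnDeriv ν x = 1 := by
    filter_upwards [hg_pos, hφ_ae] with x hx hzero
    have hgx : g x = 1 := by
      by_contra hne
      have hinv_ne : (g x)⁻¹ ≠ 1 := by
        intro h; exact hne (by rw [← inv_inv (g x), h, inv_one])
      have := Real.log_lt_sub_one_of_pos (x := (g x)⁻¹) (by positivity) hinv_ne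
      rw [Real.log_inv] at this
      simp only [hφ, Pi.zero_apply, llr, hg] at hzero
      linarith
    exact (ENNReal.toReal_eq_one_iff _).mp hgx
  -- transfer to a measure equality
  set A : Set Ω := {x | p.rnDeriv ν x = 1} with hA
  have hA_meas : MeasurableSet A := Measure.measurable_rnDeriv p ν (measurableSet_singleton 1)
  have hpAc : p Aᶜ = 0 := by
    have := ae_iff.mp hone
    simpa [hA, Set.compl_setOf] using this
  have key : ∀ s : Set Ω, MeasurableSet s → p (s ∩ A) = ν (s ∩ A) := by
    intro s hs
    rw [← Measure.setLIntegral_rnDeriv hpν (s ∩ A)]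
    rw [setLIntegral_congr_fun (f := p.rnDeriv ν) (g := fun _ => 1) (hs.inter hA_meas)
      (fun x hx => hx.2)]
    simp
  have hνA : ν A = 1 := by
    have h1 : p A = 1 := by
      have := measure_add_measure_compl (μ := p) hA_meas
      rw [hpAc, add_zero] at this; rw [this]; simp
    have := key Set.univ MeasurableSet.univ
    rw [Set.univ_inter] at this
    rw [← this, h1]
  have hνAc : ν Aᶜ = 0 := by
    rw [measure_compl hA_meas (measure_ne_top ν A), hνA, measure_univ, tsub_self]
  ext s hs
  have hp : p s = p (s ∩ A) := by
    have h0' : p (s \ A) = 0 :=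
      measure_mono_null (Set.diff_subset_compl s A) hpAc
    rw [← measure_inter_add_diff s hA_meas, h0', add_zero]
  have hν : ν s = ν (s ∩ A) := by
    have h0' : ν (s \ A) = 0 :=
      measure_mono_null (Set.diff_subset_compl s A) hνAc
    rw [← measure_inter_add_diff s hA_meas, h0', add_zero]
  rw [hp, hν, key s hs]

/-- Uniqueness half of the Gibbs variational characterization: if a probability measure
`p ≪ q` with `r` `p`-integrable and `KL(p‖q) < ∞` achieves the optimal value
`∫ r dp − α·KL(p‖q) = α·log C`, then `p` is the exponentially tilted measure
`p_tar = exp(r/α)·q/C`. -/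
theorem gibbs_unique {Ω : Type*} [MeasurableSpace Ω]
    (q : Measure Ω) [IsProbabilityMeasure q] (α : ℝ) (hα : 0 < α)
    (r : Ω → ℝ) (hr : Measurable r)
    (hexp : Integrable (fun x => Real.exp (r x / α)) q)
    (C : ℝ) (hC : C = ∫ x, Real.exp (r x / α) ∂q)
    (ptar : Measure Ω)
    (hptar : ptar = q.withDensity fun x => ENNReal.ofReal (Real.exp (r x / α) / C))
    (p : Measure Ω) [IsProbabilityMeasure p] (hpq : p ≪ q)
    (hrp : Integrable r p) (hKL : KL p q < ⊤)
    (hopt : ((∫ x, r x ∂p : ℝ) : EReal) - (α : EReal) * KL p q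
        = ((α * Real.log C : ℝ) : EReal)) :
    p = ptar := by
  set f : Ω → ℝ := fun x => r x / α with hf
  have hptar' : ptar = q.tilted f := by
    rw [hptar, Measure.tilted, hC]
  -- extract the finite KL data
  have hcond : p ≪ q ∧ Integrable (llr p q) p := by
    by_contra h
    rw [KL, if_neg h] at hKL
    exact absurd hKL (lt_irrefl _)
  have hKLeq : KL p q = ((∫ x, llr p q x ∂p : ℝ) : EReal) := by
    rw [KL, if_pos hcond]
  set K : ℝ := ∫ x, llr p q x ∂p with hK
  -- turn hopt into a real equation
  have hopt' : (∫ x, r x ∂p) - α * K = α * Real.log C := by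
    rw [hKLeq] at hopt
    have : ((∫ x, r x ∂p : ℝ) : EReal) - ((α : ℝ) : EReal) * ((K : ℝ) : EReal)
        = (((∫ x, r x ∂p) - α * K : ℝ) : EReal) := by
      rw [← EReal.coe_mul, ← EReal.coe_sub]
    rw [this] at hopt
    exact_mod_cast hopt
  -- the tilted measure is a probability measure
  have : NeZero q := ⟨IsProbabilityMeasure.ne_zero q⟩
  have hprob : IsProbabilityMeasure (q.tilted f) := isProbabilityMeasure_tilted hexp
  have hfp : Integrable f p := hrp.div_const α
  have hint : Integrable (llr p (q.tilted f)) p :=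
    integrable_llr_tilted_right hpq hfp hcond.2 hexp
  have hintegral : ∫ x, llr p (q.tilted f) x ∂p = K - ∫ x, f x ∂p + Real.log C := by
    rw [integral_llr_tilted_right hpq hfp hexp hcond.2, ← hC, hK]
  have hfint : ∫ x, f x ∂p = (∫ x, r x ∂p) / α := by
    simp only [hf]; rw [integral_div]
  have hzero : ∫ x, llr p (q.tilted f) x ∂p = 0 := by
    rw [hintegral, hfint]
    field_simp
    linarith
  have hac : p ≪ q.tilted f := hpq.trans (absolutelyContinuous_tilted hexp)
  rw [hptar']
  exact gibbs_eq_case p (q.tilted f) hac hint hzero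
end

section
/- Let μ be a probability measure on a measurable space Ω, let h : Ω → [0,∞) be measurable and μ-integrable with C := ∫ h dμ > 0, and let μ* be the measure with density h/C with respect to μ. Let E be a standard Borel space, let Y : Ω → E be measurable, and let g : E → [0,∞) be measurable such that g ∘ Y is a version of the conditional expectation of h given the σ-algebra generated by Y under μ. Then the pushforward of μ* under Y equals the measure with density g(·)/C with respect to the pushforward of μ under Y. -/
open MeasureTheory

/-- The marginal of a tilted measure (abstract form of Theorem 1): if `μ*` has density
`h/C` with respect to `μ`, where `C = ∫ h dμ > 0`, and `g ∘ Y` is a version of the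
conditional expectation of `h` given `σ(Y)` under `μ`, then the pushforward of `μ*` under
`Y` has density `g/C` with respect to the pushforward of `μ` under `Y`. -/
theorem tilted_map_eq_withDensity_condexp {Ω E : Type*}
    [MeasurableSpace Ω] [MeasurableSpace E] [StandardBorelSpace E]
    (μ : Measure Ω) [IsProbabilityMeasure μ]
    (h : Ω → ℝ) (hh : Measurable h) (hh0 : ∀ ω, 0 ≤ h ω) (hhint : Integrable h μ)
    (C : ℝ) (hC : C = ∫ ω, h ω ∂μ) (hCpos : 0 < C)
    (Y : Ω → E) (hY : Measurable Y)
    (g : E → ℝ) (hg : Measurable g) (hg0 : ∀ y, 0 ≤ g y)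
    (hcond : μ[h | MeasurableSpace.comap Y inferInstance] =ᵐ[μ] fun ω => g (Y ω)) :
    (μ.withDensity fun ω => ENNReal.ofReal (h ω / C)).map Y
      = (μ.map Y).withDensity fun y => ENNReal.ofReal (g y / C) := by
  have hm : MeasurableSpace.comap Y inferInstance ≤ ‹MeasurableSpace Ω› := hY.comap_le
  haveI : SigmaFinite (μ.trim hm) := by
    haveI : IsFiniteMeasure (μ.trim hm) := isFiniteMeasure_trim hm
    infer_instance
  have hgYint : Integrable (fun ω => g (Y ω)) μ := integrable_condExp.congr hcond
  ext s hs
  have ht : MeasurableSet (Y ⁻¹' s) := hY hs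
  rw [Measure.map_apply hY hs]
  rw [withDensity_apply _ ht, withDensity_apply _ hs,
    setLIntegral_map hs (hg.div_const C).ennreal_ofReal hY]
  have h1 : ∫⁻ ω in Y ⁻¹' s, ENNReal.ofReal (h ω / C) ∂μ
      = ENNReal.ofReal (∫ ω in Y ⁻¹' s, h ω / C ∂μ) := by
    rw [ofReal_integral_eq_lintegral_ofReal ((hhint.div_const C).restrict)
      (Filter.Eventually.of_forall fun ω => div_nonneg (hh0 ω) hCpos.le)]
  have h2 : ∫⁻ ω in Y ⁻¹' s, ENNReal.ofReal (g (Y ω) / C) ∂μ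
      = ENNReal.ofReal (∫ ω in Y ⁻¹' s, g (Y ω) / C ∂μ) := by
    rw [ofReal_integral_eq_lintegral_ofReal ((hgYint.div_const C).restrict)
      (Filter.Eventually.of_forall fun ω => div_nonneg (hg0 (Y ω)) hCpos.le)]
  rw [h1, h2]
  congr 1
  rw [integral_div, integral_div]
  congr 1
  have := setIntegral_condExp hm hhint (⟨s, hs, rfl⟩ : MeasurableSet[MeasurableSpace.comap Y inferInstance] (Y ⁻¹' s))
  rw [← this]
  exact setIntegral_congr_ae ht (hcond.mono fun ω hω _ => hω)
end

section
/- Let X and Y be measurable spaces, ν a probability measure on X, κ a Markov kernel from X to Y, and h : Y → [0,∞) measurable. Define g(x) := ∫ h dκ(x) and C := ∫ g dν, and assume 0 < C < ∞ and 0 < g(x) < ∞ for every x. Define ν* to be the measure with density g(·)/C with respect to ν, and for each x define κ*(x) to be the measure with density h(·)/g(x) with respect to κ(x). Then κ* is a Markov kernel and the measure with density (x,y) ↦ h(y)/C with respect to ν ⊗ κ equals ν* ⊗ κ*, where ⊗ denotes composition of a measure with a kernel on the product space. -/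
open MeasureTheory ProbabilityTheory
open scoped ENNReal

/-- Tilting a two-stage law by a function of the second coordinate (abstract form of the
paper's Lemma 3): tilting `ν ⊗ κ` by `h(y)/C` tilts the first marginal by `g/C`, where
`g(x) = ∫ h dκ(x)` and `C = ∫ g dν`, and tilts the conditional law `κ(x)` by `h(·)/g(x)`;
the tilted conditionals form a Markov kernel `κ*` and `(ν ⊗ κ)·(h(y)/C) = ν* ⊗ κ*`. -/
theorem tilted_compProd {X Y : Type*} [MeasurableSpace X] [MeasurableSpace Y]
    (ν : Measure X) [IsProbabilityMeasure ν] (κ : Kernel X Y) [IsMarkovKernel κ]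
    (h : Y → ℝ) (hh : Measurable h) (hh0 : ∀ y, 0 ≤ h y)
    (g : X → ℝ) (hg : g = fun x => ∫ y, h y ∂(κ x)) (hgpos : ∀ x, 0 < g x)
    (C : ℝ) (hC : C = ∫ x, g x ∂ν) (hCpos : 0 < C) :
    ∃ κstar : Kernel X Y, IsMarkovKernel κstar ∧
      (∀ x, κstar x = (κ x).withDensity fun y => ENNReal.ofReal (h y / g x)) ∧
      (ν ⊗ₘ κ).withDensity (fun p => ENNReal.ofReal (h p.2 / C))
        = (ν.withDensity fun x => ENNReal.ofReal (g x / C)) ⊗ₘ κstar := by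
  -- measurability of g
  have hgm : Measurable g := by
    rw [hg]
    exact (MeasureTheory.StronglyMeasurable.integral_kernel_prod_right'
      (f := fun p : X × Y => h p.2) (hh.comp measurable_snd).stronglyMeasurable).measurable
  -- integrability of h w.r.t. κ x
  have hint : ∀ x, Integrable h (κ x) := by
    intro x
    by_contra hcon
    have : g x = 0 := by rw [hg]; exact integral_undef hcon
    exact absurd this (ne_of_gt (hgpos x))
  have hlin : ∀ x, ∫⁻ y, ENNReal.ofReal (h y) ∂(κ x) = ENNReal.ofReal (g x) := by
    intro x
    rw [hg]
    exact (MeasureTheory.ofReal_integral_eq_lintegral_ofReal (hint x)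
      (Filter.Eventually.of_forall hh0)).symm
  -- the density for the kernel
  have hdm : Measurable (Function.uncurry fun x y => ENNReal.ofReal (h y / g x)) := by
    apply Measurable.ennreal_ofReal
    exact (hh.comp measurable_snd).div (hgm.comp measurable_fst)
  set κstar : Kernel X Y := Kernel.withDensity κ (fun x y => ENNReal.ofReal (h y / g x))
    with hκstar
  have happ : ∀ x, κstar x = (κ x).withDensity fun y => ENNReal.ofReal (h y / g x) := by
    intro x
    rw [hκstar, Kernel.withDensity_apply _ hdm]
  have hmark : IsMarkovKernel κstar := by
    constructor
    intro x
    constructor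
    rw [happ x, withDensity_apply _ MeasurableSet.univ, setLIntegral_univ]
    have : ∀ y, ENNReal.ofReal (h y / g x)
        = ENNReal.ofReal (g x)⁻¹ * ENNReal.ofReal (h y) := by
      intro y
      rw [div_eq_inv_mul, ENNReal.ofReal_mul (inv_nonneg.mpr (hgpos x).le)]
    simp_rw [this]
    rw [lintegral_const_mul _ hh.ennreal_ofReal, hlin x,
      ← ENNReal.ofReal_mul (inv_nonneg.mpr (hgpos x).le), inv_mul_cancel₀ (ne_of_gt (hgpos x)),
      ENNReal.ofReal_one]
  refine ⟨κstar, hmark, happ, ?_⟩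
  ext s hs
  -- LHS
  have hfm : Measurable fun p : X × Y => ENNReal.ofReal (h p.2 / C) :=
    ((hh.comp measurable_snd).div_const C).ennreal_ofReal
  rw [withDensity_apply _ hs, ← lintegral_indicator hs _, Measure.lintegral_compProd
    (hfm.indicator hs)]
  -- RHS
  rw [Measure.compProd_apply hs,
    lintegral_withDensity_eq_lintegral_mul _ ((hgm.div_const C).ennreal_ofReal)
      (Kernel.measurable_kernel_prodMk_left hs)]
  refine lintegral_congr fun x => ?_
  have hsx : MeasurableSet (Prod.mk x ⁻¹' s) := measurable_prodMk_left hs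
  have hindic : (fun y => s.indicator (fun p : X × Y => ENNReal.ofReal (h p.2 / C)) (x, y))
      = (Prod.mk x ⁻¹' s).indicator (fun y => ENNReal.ofReal (h y / C)) := by
    ext y
    by_cases hy : (x, y) ∈ s <;> simp [Set.indicator, hy, Set.mem_preimage]
  rw [hindic, lintegral_indicator hsx _]
  simp only [Pi.mul_apply]
  rw [happ x, withDensity_apply _ hsx, ← lintegral_const_mul _ (by
    exact (hh.div_const (g x)).ennreal_ofReal)]
  refine setLIntegral_congr_fun hsx (fun y _ => ?_)
  rw [← ENNReal.ofReal_mul (div_nonneg (hgpos x).le hCpos.le)]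
  congr 1
  rw [div_mul_div_comm, mul_comm C (g x), mul_div_mul_left _ _ (ne_of_gt (hgpos x))]
end

section
/- Let Ω and E be standard Borel spaces, let μ be a probability measure on Ω, let T : Ω → E be measurable, and let h : E → [0,∞) be measurable with C := ∫ (h ∘ T) dμ ∈ (0,∞). Let μ* be the measure with density (h∘T)/C with respect to μ. Then the regular conditional distribution of the identity given T under μ* agrees with the regular conditional distribution of the identity given T under μ, for (μ*.map T)-almost every point of E. -/
open MeasureTheory ProbabilityTheory
open scoped ENNReal

/-- Mapping a with-density measure by `f` when the density factors through `f`. -/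
lemma map_withDensity_comp {α β : Type*} [MeasurableSpace α] [MeasurableSpace β]
    (μ : Measure α) {f : α → β} (hf : Measurable f) {g : β → ℝ≥0∞} (hg : Measurable g) :
    (μ.withDensity (fun a => g (f a))).map f = (μ.map f).withDensity g := by
  ext s hs
  rw [Measure.map_apply hf hs, withDensity_apply _ (hf hs), withDensity_apply _ hs,
    MeasureTheory.setLIntegral_map hs hg hf]

/-- A density depending only on the first coordinate commutes with `compProd`. -/
lemma withDensity_fst_compProd {α β : Type*} [MeasurableSpace α] [MeasurableSpace β]
    (ν : Measure α) [SFinite ν] (κ : ProbabilityTheory.Kernel α β) [IsSFiniteKernel κ]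
    {g : α → ℝ≥0∞} (hg : Measurable g) :
    (ν ⊗ₘ κ).withDensity (fun p => g p.1) = ν.withDensity g ⊗ₘ κ := by
  ext s hs
  rw [withDensity_apply _ hs, Measure.compProd_apply hs,
    MeasureTheory.lintegral_withDensity_eq_lintegral_mul _ hg
      (ProbabilityTheory.Kernel.measurable_kernel_prodMk_left hs),
    ← lintegral_indicator hs,
    Measure.lintegral_compProd
      ((show Measurable fun p : α × β => g p.1 from hg.comp measurable_fst).indicator hs)]
  refine lintegral_congr fun a => ?_
  have hb : ∀ b, s.indicator (fun p : α × β => g p.1) (a, b)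
      = (Prod.mk a ⁻¹' s).indicator (fun _ => g a) b := by
    intro b
    by_cases hmem : (a, b) ∈ s <;> simp [Set.indicator, hmem]
  simp_rw [hb]
  rw [lintegral_indicator_const (measurable_prodMk_left hs)]
  rfl

set_option maxHeartbeats 1000000 in
/-- Bridge preservation (the paper's Lemma 6): tilting a probability measure `μ` on a
standard Borel space by a function `h ∘ T` of a measurable map `T` (normalized by
`C = ∫ h ∘ T dμ ∈ (0,∞)`) does not change the regular conditional distribution of the
identity given `T`: the conditional kernels under `μ*` and under `μ` agree
`(μ*.map T)`-almost everywhere. -/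
theorem bridge_preserved {Ω E : Type*}
    [MeasurableSpace Ω] [StandardBorelSpace Ω] [Nonempty Ω]
    [MeasurableSpace E] [StandardBorelSpace E]
    (μ : Measure Ω) [IsProbabilityMeasure μ] (T : Ω → E) (hT : Measurable T)
    (h : E → ℝ) (hh : Measurable h) (hh0 : ∀ y, 0 ≤ h y)
    (C : ℝ) (hC : C = ∫ ω, h (T ω) ∂μ) (hCpos : 0 < C)
    (μstar : Measure Ω) [IsFiniteMeasure μstar]
    (hμstar : μstar = μ.withDensity fun ω => ENNReal.ofReal (h (T ω) / C)) :
    ∀ᵐ e ∂(μstar.map T), condDistrib id T μstar e = condDistrib id T μ e := by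
  have hg : Measurable fun e => ENNReal.ofReal (h e / C) := (hh.div_const C).ennreal_ofReal
  have hκ : μ.map (fun x => (T x, id x)) = μ.map T ⊗ₘ condDistrib id T μ := by
    have hfst : (μ.map fun a => (T a, id a)).fst = μ.map T :=
      Measure.fst_map_prodMk₀ (aemeasurable_id (μ := μ))
    calc μ.map (fun x => (T x, id x))
        = (μ.map fun a => (T a, id a)).fst ⊗ₘ (μ.map fun a => (T a, id a)).condKernel :=
          ((μ.map fun a => (T a, id a)).disintegrate _).symm
      _ = μ.map T ⊗ₘ condDistrib id T μ := by rw [hfst, condDistrib_def]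
  have h1 : μstar.map (fun x => (T x, id x))
      = (μ.map (fun x => (T x, id x))).withDensity
        (fun p : E × Ω => ENNReal.ofReal (h p.1 / C)) := by
    rw [hμstar]
    exact map_withDensity_comp (f := fun x : Ω => (T x, id x))
      (g := fun p : E × Ω => ENNReal.ofReal (h p.1 / C)) μ (hT.prodMk measurable_id)
      (hg.comp measurable_fst)
  have h2 : μstar.map T = (μ.map T).withDensity fun e => ENNReal.ofReal (h e / C) := by
    rw [hμstar]
    exact map_withDensity_comp (f := T)
      (g := fun e => ENNReal.ofReal (h e / C)) μ hT hg
  have key : μstar.map (fun x => (T x, id x)) = μstar.map T ⊗ₘ condDistrib id T μ := by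
    rw [h1, hκ, withDensity_fst_compProd _ _ hg, h2]
  have := condDistrib_ae_eq_of_measure_eq_compProd (μ := μstar) T measurable_id.aemeasurable
    (κ := condDistrib id T μ) key
  filter_upwards [this] with e he using he
end

section
/- Let μ be a probability measure on a measurable space Ω, let E₁ and E₂ be standard Borel spaces, let X : Ω → E₁ and Y : Ω → E₂ be measurable, let h : Ω → [0,∞) be measurable and μ-integrable with C := ∫ h dμ ∈ (0,∞), and let μ* be the measure with density h/C with respect to μ. Let g : E₂ → [0,∞) be measurable such that g ∘ Y is a version of the conditional expectation of h given σ(Y) under μ, and assume the Markov-type property that the conditional expectation of h given the σ-algebra generated jointly by X and Y equals μ-almost everywhere the conditional expectation of h given σ(Y). Then the pushforward of μ* under ω ↦ (X(ω), Y(ω)) equals the measure with density (x,y) ↦ g(y)/C with respect to the pushforward of μ under ω ↦ (X(ω), Y(ω)). -/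
open MeasureTheory

/-- Joint distributions under tilting (abstract form of the paper's Lemma 3): if `μ*` has
density `h/C` with respect to `μ` with `C = ∫ h dμ ∈ (0,∞)`, `g ∘ Y` is a version of the
conditional expectation of `h` given `σ(Y)`, and the conditional expectation of `h` given
the σ-algebra generated jointly by `X` and `Y` agrees μ-a.e. with that given `σ(Y)`
(a Markov-type property), then the joint law of `(X, Y)` under `μ*` has density
`(x,y) ↦ g(y)/C` with respect to the joint law of `(X, Y)` under `μ`. -/
theorem tilted_joint_law {Ω E₁ E₂ : Type*} [MeasurableSpace Ω]
    [MeasurableSpace E₁] [StandardBorelSpace E₁]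
    [MeasurableSpace E₂] [StandardBorelSpace E₂]
    (μ : Measure Ω) [IsProbabilityMeasure μ]
    (X : Ω → E₁) (hX : Measurable X) (Y : Ω → E₂) (hY : Measurable Y)
    (h : Ω → ℝ) (hh : Measurable h) (hh0 : ∀ ω, 0 ≤ h ω) (hhint : Integrable h μ)
    (C : ℝ) (hC : C = ∫ ω, h ω ∂μ) (hCpos : 0 < C)
    (g : E₂ → ℝ) (hg : Measurable g)
    (hcond : μ[h | MeasurableSpace.comap Y inferInstance] =ᵐ[μ] fun ω => g (Y ω))
    (hmarkov : μ[h | MeasurableSpace.comap (fun ω => (X ω, Y ω)) inferInstance]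
        =ᵐ[μ] μ[h | MeasurableSpace.comap Y inferInstance]) :
    (μ.withDensity fun ω => ENNReal.ofReal (h ω / C)).map (fun ω => (X ω, Y ω))
      = (μ.map fun ω => (X ω, Y ω)).withDensity fun p => ENNReal.ofReal (g p.2 / C) := by
  have hZ : Measurable fun ω => (X ω, Y ω) := hX.prodMk hY
  have hgY_int : Integrable (fun ω => g (Y ω)) μ := integrable_condExp.congr hcond
  have hgY_nn : 0 ≤ᵐ[μ] fun ω => g (Y ω) := by
    filter_upwards [hcond, condExp_nonneg (μ := μ)
      (m := MeasurableSpace.comap Y inferInstance) (Filter.Eventually.of_forall hh0)]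
      with ω h1 h2
    rw [← h1]; exact h2
  ext s hs
  have hA : MeasurableSet ((fun ω => (X ω, Y ω)) ⁻¹' s) := hZ hs
  rw [Measure.map_apply hZ hs, withDensity_apply _ hA, withDensity_apply _ hs,
    setLIntegral_map hs (show Measurable fun p : E₁ × E₂ => ENNReal.ofReal (g p.2 / C) by fun_prop) hZ]
  -- both sides: lintegral of ofReal over the preimage A
  set A := (fun ω => (X ω, Y ω)) ⁻¹' s with hAdef
  have hhdiv_int : Integrable (fun ω => h ω / C) μ := hhint.div_const C
  have hgdiv_int : Integrable (fun ω => g (Y ω) / C) μ := hgY_int.div_const C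
  rw [← ofReal_integral_eq_lintegral_ofReal hhdiv_int.integrableOn
      (Filter.Eventually.of_forall fun ω => div_nonneg (hh0 ω) hCpos.le) ,
    ← ofReal_integral_eq_lintegral_ofReal hgdiv_int.integrableOn
      (ae_restrict_of_ae (hgY_nn.mono fun ω hω => div_nonneg hω hCpos.le))]
  congr 1
  rw [integral_div, integral_div]
  congr 1
  have key : ∫ ω in A, h ω ∂μ
      = ∫ ω in A, (μ[h | MeasurableSpace.comap (fun ω => (X ω, Y ω)) inferInstance]) ω ∂μ := by
    rw [setIntegral_condExp hZ.comap_le hhint ⟨s, hs, rfl⟩]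
  rw [key, setIntegral_congr_ae hA ((hmarkov.trans hcond).mono fun ω hω _ => hω)]
end

section
/- Let d be a positive integer, E := EuclideanSpace ℝ (Fin d), α > 0, σ : ℝ → ℝ, f : ℝ → E → E, and let v : ℝ → E → ℝ be such that (t,x) ↦ v(t,x) is twice continuously differentiable. Suppose that for all (t,x), (σ(t)²/2)·Δ_x v(t,x) + ⟨f(t,x), ∇_x v(t,x)⟩ + ∂_t v(t,x) + (σ(t)²/(2α))·‖∇_x v(t,x)‖² = 0, where ∇_x is the gradient in x, Δ_x is the Laplacian in x (the sum of second partial derivatives along the standard coordinates), and ∂_t is the partial derivative in t. Then w(t,x) := exp(v(t,x)/α) satisfies, for all (t,x), (σ(t)²/2)·Δ_x w(t,x) + ⟨f(t,x), ∇_x w(t,x)⟩ + ∂_t w(t,x) = 0. -/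
open scoped RealInnerProductSpace

/-- Second partial derivative of `φ : E → ℝ` along the `i`-th standard coordinate. -/
noncomputable def secondPartial {d : ℕ} (φ : EuclideanSpace ℝ (Fin d) → ℝ) (i : Fin d)
    (x : EuclideanSpace ℝ (Fin d)) : ℝ :=
  fderiv ℝ (fun y => fderiv ℝ φ y (EuclideanSpace.single i 1)) x (EuclideanSpace.single i 1)

/-- Laplacian of `φ : E → ℝ`: the sum of its second partial derivatives along the
standard coordinates. -/
noncomputable def lapl {d : ℕ} (φ : EuclideanSpace ℝ (Fin d) → ℝ)
    (x : EuclideanSpace ℝ (Fin d)) : ℝ :=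
  ∑ i, secondPartial φ i x

/-- Hopf–Cole transformation (forward direction, the paper's proof of Lemma 2): if `v`
solves the Hamilton–Jacobi–Bellman equation
`(σ²/2)·Δₓv + ⟨f, ∇ₓv⟩ + ∂ₜv + (σ²/(2α))·‖∇ₓv‖² = 0`,
then `w := exp(v/α)` solves the linear backward Kolmogorov equation
`(σ²/2)·Δₓw + ⟨f, ∇ₓw⟩ + ∂ₜw = 0`. -/
theorem hopf_cole_exp {d : ℕ} (hd : 0 < d) (α : ℝ) (hα : 0 < α) (σ : ℝ → ℝ)
    (f : ℝ → EuclideanSpace ℝ (Fin d) → EuclideanSpace ℝ (Fin d))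
    (v : ℝ → EuclideanSpace ℝ (Fin d) → ℝ)
    (hv : ContDiff ℝ 2 (fun p : ℝ × EuclideanSpace ℝ (Fin d) => v p.1 p.2))
    (hHJB : ∀ (t : ℝ) (x : EuclideanSpace ℝ (Fin d)),
      (σ t) ^ 2 / 2 * lapl (v t) x + ⟪f t x, gradient (v t) x⟫
        + deriv (fun s => v s x) t
        + (σ t) ^ 2 / (2 * α) * ‖gradient (v t) x‖ ^ 2 = 0) :
    ∀ (t : ℝ) (x : EuclideanSpace ℝ (Fin d)),
      (σ t) ^ 2 / 2 * lapl (fun y => Real.exp (v t y / α)) x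
        + ⟪f t x, gradient (fun y => Real.exp (v t y / α)) x⟫
        + deriv (fun s => Real.exp (v s x / α)) t = 0 := by
  intro t x
  have hα0 : α ≠ 0 := ne_of_gt hα
  have hHJBtx := hHJB t x
  set φ : EuclideanSpace ℝ (Fin d) → ℝ := v t with hφdef
  have hφ : ContDiff ℝ 2 φ := hv.comp (contDiff_const.prodMk contDiff_id)
  have hφ1 : Differentiable ℝ φ := hφ.differentiable two_ne_zero
  have hφ11 : ContDiff ℝ (1 + 1) φ := by
    rw [one_add_one_eq_two]; exact hφ
  have hDφ : ContDiff ℝ 1 (fderiv ℝ φ) :=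
    (contDiff_succ_iff_fderiv.mp hφ11).2.2
  -- derivative of exp(φ/α)
  have hdiv : ∀ y, HasFDerivAt (fun z => φ z / α) (α⁻¹ • fderiv ℝ φ y) y := by
    intro y
    simpa [div_eq_inv_mul, smul_eq_mul] using ((hφ1 y).hasFDerivAt.fun_const_smul (α⁻¹ : ℝ))
  have hw : ∀ y, HasFDerivAt (fun z => Real.exp (φ z / α))
      ((Real.exp (φ y / α) / α) • fderiv ℝ φ y) y := by
    intro y
    have := (hdiv y).exp
    simpa [smul_smul, div_eq_mul_inv] using this
  have hfw : ∀ y, fderiv ℝ (fun z => Real.exp (φ z / α)) y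
      = (Real.exp (φ y / α) / α) • fderiv ℝ φ y := fun y => (hw y).fderiv
  set c : ℝ := Real.exp (φ x / α) / α with hc
  -- gradient of exp(φ/α)
  have hgw : gradient (fun z => Real.exp (φ z / α)) x = c • gradient φ x := by
    simp only [gradient, hfw x, map_smul, hc]
  -- gradient applied
  have hgrad_apply : ∀ i : Fin d,
      fderiv ℝ φ x (EuclideanSpace.single i 1) = gradient φ x i := by
    intro i
    have h1 : ⟪gradient φ x, EuclideanSpace.single i (1 : ℝ)⟫
        = fderiv ℝ φ x (EuclideanSpace.single i 1) := by
      simp only [gradient]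
      exact InnerProductSpace.toDual_symm_apply
    rw [← h1]
    simpa using EuclideanSpace.inner_single_right (𝕜 := ℝ) i 1 (gradient φ x)
  have hsum : ∑ i, (fderiv ℝ φ x (EuclideanSpace.single i 1)) ^ 2
      = ‖gradient φ x‖ ^ 2 := by
    rw [← real_inner_self_eq_norm_sq]
    simp only [hgrad_apply]
    rw [PiLp.inner_apply]
    simp [sq]
  -- second partials of exp(φ/α)
  have hsp : ∀ i : Fin d, secondPartial (fun z => Real.exp (φ z / α)) i x
      = c * secondPartial φ i x
        + c / α * (fderiv ℝ φ x (EuclideanSpace.single i 1)) ^ 2 := by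
    intro i
    set e : EuclideanSpace ℝ (Fin d) := EuclideanSpace.single i 1 with he
    have hAdiff : Differentiable ℝ (fun y => Real.exp (φ y / α) / α) := by
      simp only [div_eq_mul_inv]
      exact fun y => ((hw y).differentiableAt).mul_const _
    have hBdiff : DifferentiableAt ℝ (fun y => fderiv ℝ φ y e) x :=
      ((hDφ.differentiable one_ne_zero) x).clm_apply (differentiableAt_const e)
    have hcongr : (fun y => fderiv ℝ (fun z => Real.exp (φ z / α)) y e)
        = fun y => (Real.exp (φ y / α) / α) * fderiv ℝ φ y e := by
      funext y
      rw [hfw y]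
      simp
    have hfA : fderiv ℝ (fun y => Real.exp (φ y / α) / α) x e = c / α * fderiv ℝ φ x e := by
      have h1 : (fun y => Real.exp (φ y / α) / α) = fun y => α⁻¹ * Real.exp (φ y / α) := by
        funext y; rw [div_eq_inv_mul]
      rw [h1, fderiv_const_mul ((hw x).differentiableAt) (α⁻¹ : ℝ)]
      rw [hfw x]
      simp only [ContinuousLinearMap.coe_smul', Pi.smul_apply, smul_eq_mul, hc]
      ring
    unfold secondPartial
    rw [hcongr, fderiv_fun_mul (hAdiff x) hBdiff]
    simp only [ContinuousLinearMap.add_apply, ContinuousLinearMap.coe_smul', Pi.smul_apply,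
      smul_eq_mul]
    rw [hfA]
    have : fderiv ℝ (fun y => fderiv ℝ φ y e) x e = secondPartial φ i x := rfl
    rw [this]
    rw [hc]
    ring
  have hlapl : lapl (fun z => Real.exp (φ z / α)) x
      = c * lapl φ x + c / α * ‖gradient φ x‖ ^ 2 := by
    unfold lapl
    rw [← hsum]
    rw [Finset.sum_congr rfl (fun i _ => hsp i)]
    rw [Finset.sum_add_distrib, ← Finset.mul_sum, ← Finset.mul_sum]
  -- time derivative
  have hvt : DifferentiableAt ℝ (fun s => v s x) t := by
    have h2 : Differentiable ℝ (fun s : ℝ => (s, x)) :=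
      differentiable_id.prodMk (differentiable_const x)
    exact ((hv.differentiable two_ne_zero).comp h2) t
  have hderiv_t : deriv (fun s => Real.exp (v s x / α)) t
      = Real.exp (v t x / α) * (deriv (fun s => v s x) t / α) := by
    have h1 : HasDerivAt (fun s => v s x) (deriv (fun s => v s x) t) t := hvt.hasDerivAt
    exact ((h1.div_const α).exp).deriv
  -- put it together
  have hinner : ⟪f t x, gradient (fun z => Real.exp (φ z / α)) x⟫
      = c * ⟪f t x, gradient φ x⟫ := by
    rw [hgw, real_inner_smul_right]
  rw [hlapl, hinner, hderiv_t]
  have hcval : c = Real.exp (v t x / α) / α := by rw [hc, hφdef]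
  rw [hcval]
  have hφtx : φ x = v t x := rfl
  linear_combination (Real.exp (v t x / α) / α) * hHJBtx
end

section
/- Let d be a positive integer, E := EuclideanSpace ℝ (Fin d), α > 0, σ : ℝ → ℝ, f : ℝ → E → E, and let w : ℝ → E → ℝ be such that (t,x) ↦ w(t,x) is twice continuously differentiable and w(t,x) > 0 for all (t,x). Suppose that for all (t,x), (σ(t)²/2)·Δ_x w(t,x) + ⟨f(t,x), ∇_x w(t,x)⟩ + ∂_t w(t,x) = 0. Then v(t,x) := α·log w(t,x) satisfies, for all (t,x), (σ(t)²/2)·Δ_x v(t,x) + ⟨f(t,x), ∇_x v(t,x)⟩ + ∂_t v(t,x) + (σ(t)²/(2α))·‖∇_x v(t,x)‖² = 0. -/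
open scoped RealInnerProductSpace

/-- Hopf–Cole transformation (converse direction, the paper's proof of Lemma 2): if a
positive `w` solves the linear backward Kolmogorov equation
`(σ²/2)·Δₓw + ⟨f, ∇ₓw⟩ + ∂ₜw = 0`, then `v := α·log w` solves the
Hamilton–Jacobi–Bellman equation
`(σ²/2)·Δₓv + ⟨f, ∇ₓv⟩ + ∂ₜv + (σ²/(2α))·‖∇ₓv‖² = 0`. -/
theorem hopf_cole_log {d : ℕ} (hd : 0 < d) (α : ℝ) (hα : 0 < α) (σ : ℝ → ℝ)
    (f : ℝ → EuclideanSpace ℝ (Fin d) → EuclideanSpace ℝ (Fin d))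
    (w : ℝ → EuclideanSpace ℝ (Fin d) → ℝ)
    (hw : ContDiff ℝ 2 (fun p : ℝ × EuclideanSpace ℝ (Fin d) => w p.1 p.2))
    (hwpos : ∀ (t : ℝ) (x : EuclideanSpace ℝ (Fin d)), 0 < w t x)
    (hKol : ∀ (t : ℝ) (x : EuclideanSpace ℝ (Fin d)),
      (σ t) ^ 2 / 2 * lapl (w t) x + ⟪f t x, gradient (w t) x⟫
        + deriv (fun s => w s x) t = 0) :
    ∀ (t : ℝ) (x : EuclideanSpace ℝ (Fin d)),
      (σ t) ^ 2 / 2 * lapl (fun y => α * Real.log (w t y)) x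
        + ⟪f t x, gradient (fun y => α * Real.log (w t y)) x⟫
        + deriv (fun s => α * Real.log (w s x)) t
        + (σ t) ^ 2 / (2 * α) * ‖gradient (fun y => α * Real.log (w t y)) x‖ ^ 2 = 0 := by
  intro t x
  have hW : 0 < w t x := hwpos t x
  have hWne : w t x ≠ 0 := ne_of_gt hW
  have hαne : α ≠ 0 := ne_of_gt hα
  -- slice regularity
  have hg : ContDiff ℝ 2 (w t) := by
    have : ContDiff ℝ 2 (fun y : EuclideanSpace ℝ (Fin d) => (t, y)) :=
      contDiff_const.prodMk contDiff_id
    exact hw.comp this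
  have hsc : ContDiff ℝ 2 (fun s => w s x) := by
    have : ContDiff ℝ 2 (fun s : ℝ => (s, x)) := contDiff_id.prodMk contDiff_const
    exact hw.comp this
  have hder : ∀ y, HasFDerivAt (w t) (fderiv ℝ (w t) y) y := fun y =>
    ((hg.differentiable (by norm_num)) y).hasFDerivAt
  -- time derivative
  have hA : deriv (fun s => α * Real.log (w s x)) t
      = α * (deriv (fun s => w s x) t / w t x) := by
    have h1 : HasDerivAt (fun s => w s x) (deriv (fun s => w s x) t) t :=
      ((hsc.differentiable (by norm_num)) t).hasDerivAt
    exact ((h1.log hWne).const_mul α).deriv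
  -- first space derivative
  have hφ : ∀ y, HasFDerivAt (fun z => α * Real.log (w t z))
      ((α * (w t y)⁻¹) • fderiv ℝ (w t) y) y := by
    intro y
    have := ((hder y).log (ne_of_gt (hwpos t y))).const_mul α
    simpa [smul_smul] using this
  -- gradient identities
  have hgradw : gradient (w t) x
      = (InnerProductSpace.toDual ℝ _).symm (fderiv ℝ (w t) x) :=
    ((hder x).hasGradientAt).gradient
  have hgrad : gradient (fun y => α * Real.log (w t y)) x
      = (α / w t x) • gradient (w t) x := by
    rw [((hφ x).hasGradientAt).gradient, hgradw, map_smul, div_eq_mul_inv]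
  -- coordinates of the gradient of w t
  set D : Fin d → ℝ := fun i => fderiv ℝ (w t) x (EuclideanSpace.single i 1) with hD
  have hcoord : ∀ i, gradient (w t) x i = D i := by
    intro i
    have : fderiv ℝ (w t) x (EuclideanSpace.single i 1)
        = ⟪gradient (w t) x, EuclideanSpace.single i 1⟫ := by
      rw [hgradw]
      simp [InnerProductSpace.toDual_symm_apply]
    rw [hD]
    simp only [this, EuclideanSpace.inner_single_right]
    simp
  have hnorm : ‖gradient (w t) x‖ ^ 2 = ∑ i, (D i) ^ 2 := by
    rw [← real_inner_self_eq_norm_sq, PiLp.inner_apply]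
    refine Finset.sum_congr rfl fun i _ => ?_
    rw [hcoord i]; exact (sq (D i)).symm
  -- second derivatives
  have hfd : ContDiff ℝ 1 (fderiv ℝ (w t)) := hg.fderiv_right (by norm_num)
  have hsp : ∀ i, secondPartial (fun y => α * Real.log (w t y)) i x
      = α / w t x * secondPartial (w t) i x - α / (w t x) ^ 2 * (D i) ^ 2 := by
    intro i
    set e := EuclideanSpace.single (𝕜 := ℝ) i (1 : ℝ) with he
    have hu : ContDiff ℝ 1 (fun y => fderiv ℝ (w t) y e) :=
      hfd.clm_apply contDiff_const
    have hu' : HasFDerivAt (fun y => fderiv ℝ (w t) y e)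
        (fderiv ℝ (fun y => fderiv ℝ (w t) y e) x) x :=
      ((hu.differentiable (by norm_num)) x).hasFDerivAt
    have hc : HasFDerivAt (fun y => α * (w t y)⁻¹)
        (α • ((-(w t x ^ 2)⁻¹) • fderiv ℝ (w t) x)) x :=
      (((hasDerivAt_inv hWne).comp_hasFDerivAt x (hder x))).const_mul α
    have hmul : HasFDerivAt (fun y => (α * (w t y)⁻¹) * fderiv ℝ (w t) y e)
        ((α * (w t x)⁻¹) • fderiv ℝ (fun y => fderiv ℝ (w t) y e) x
          + (fderiv ℝ (w t) x e) • (α • ((-(w t x ^ 2)⁻¹) • fderiv ℝ (w t) x))) x := hc.mul hu'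
    have hfun : (fun y => fderiv ℝ (fun z => α * Real.log (w t z)) y e)
        = fun y => (α * (w t y)⁻¹) * fderiv ℝ (w t) y e := by
      funext y
      rw [(hφ y).fderiv]
      simp
    have : secondPartial (fun y => α * Real.log (w t y)) i x
        = fderiv ℝ (fun y => (α * (w t y)⁻¹) * fderiv ℝ (w t) y e) x e := by
      rw [secondPartial, ← he, ← hfun]
    rw [this, hmul.fderiv]
    have h2 : secondPartial (w t) i x = fderiv ℝ (fun y => fderiv ℝ (w t) y e) x e := rfl
    simp only [ContinuousLinearMap.add_apply, ContinuousLinearMap.smul_apply,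
      smul_eq_mul, ← h2, hD]
    field_simp
    ring
  have hlap : lapl (fun y => α * Real.log (w t y)) x
      = α / w t x * lapl (w t) x - α / (w t x) ^ 2 * ∑ i, (D i) ^ 2 := by
    rw [lapl, lapl, Finset.mul_sum, Finset.mul_sum, ← Finset.sum_sub_distrib]
    exact Finset.sum_congr rfl fun i _ => hsp i
  -- put everything together
  have hK := hKol t x
  rw [hlap, hgrad, hA, real_inner_smul_right, norm_smul, mul_pow, hnorm]
  have habs : |α / w t x| ^ 2 = (α / w t x) ^ 2 := sq_abs _
  rw [Real.norm_eq_abs, habs]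
  set S := lapl (w t) x
  set Q := ∑ i, (D i) ^ 2
  set IP : ℝ := ⟪f t x, gradient (w t) x⟫
  set Wt := deriv (fun s => w s x) t
  have hWt : Wt = -(σ t ^ 2 / 2 * S + IP) := by linarith
  rw [hWt]
  field_simp
  ring
end

section
/- Let d be a positive integer, E := EuclideanSpace ℝ (Fin d), σ : ℝ → ℝ, C > 0, and let f : ℝ → E → E, p : ℝ → E → ℝ, w : ℝ → E → ℝ all be twice continuously differentiable in (t,x), with w(t,x) > 0 for all (t,x). Assume for all (t,x): (i) ∂_t p(t,x) + div_x(x ↦ p(t,x)·f(t,x)) − (σ(t)²/2)·Δ_x p(t,x) = 0, and (ii) ∂_t w(t,x) + ⟨f(t,x), ∇_x w(t,x)⟩ + (σ(t)²/2)·Δ_x w(t,x) = 0, where div_x of a vector field is the sum of the partial derivatives of its coordinates along standard coordinates. Define u(t,x) := (σ(t)²/w(t,x))·∇_x w(t,x) and g(t,x) := w(t,x)·p(t,x)/C. Then for all (t,x), ∂_t g(t,x) + div_x(x ↦ g(t,x)·(f(t,x) + u(t,x))) − (σ(t)²/2)·Δ_x g(t,x) = 0. -/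
open scoped RealInnerProductSpace

/-- Divergence of a vector field `F : E → E`: the sum of the partial derivatives of its
coordinates along the standard coordinates. -/
noncomputable def diverg {d : ℕ} (F : EuclideanSpace ℝ (Fin d) → EuclideanSpace ℝ (Fin d))
    (x : EuclideanSpace ℝ (Fin d)) : ℝ :=
  ∑ i, fderiv ℝ (fun y => F y i) x (EuclideanSpace.single i 1)

namespace ForwardTilted

variable {d : ℕ}

lemma fderiv_mul_apply' {a b : EuclideanSpace ℝ (Fin d) → ℝ} {x : EuclideanSpace ℝ (Fin d)}
    (ha : DifferentiableAt ℝ a x) (hb : DifferentiableAt ℝ b x) (v : EuclideanSpace ℝ (Fin d)) :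
    fderiv ℝ (fun y => a y * b y) x v = fderiv ℝ a x v * b x + a x * fderiv ℝ b x v := by
  rw [fderiv_fun_mul ha hb]
  simp [smul_eq_mul]
  ring

lemma fderiv_mul_const_apply' {a : EuclideanSpace ℝ (Fin d) → ℝ} {x : EuclideanSpace ℝ (Fin d)}
    (ha : DifferentiableAt ℝ a x) (c : ℝ) (v : EuclideanSpace ℝ (Fin d)) :
    fderiv ℝ (fun y => a y * c) x v = fderiv ℝ a x v * c := by
  rw [fderiv_mul_const ha]
  simp [smul_eq_mul, mul_comm]

lemma fderiv_const_mul_apply' {a : EuclideanSpace ℝ (Fin d) → ℝ} {x : EuclideanSpace ℝ (Fin d)}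
    (ha : DifferentiableAt ℝ a x) (c : ℝ) (v : EuclideanSpace ℝ (Fin d)) :
    fderiv ℝ (fun y => c * a y) x v = c * fderiv ℝ a x v := by
  rw [fderiv_const_mul ha]
  simp

lemma diff_pd {φ : EuclideanSpace ℝ (Fin d) → ℝ} (hφ : ContDiff ℝ 2 φ)
    (v : EuclideanSpace ℝ (Fin d)) :
    Differentiable ℝ (fun y => fderiv ℝ φ y v) :=
  fun y => (((hφ.fderiv_right (m := 1) (by norm_num)).differentiable (by norm_num)) y).clm_apply
    (differentiableAt_const v)

lemma secondPartial_mul {φ ψ : EuclideanSpace ℝ (Fin d) → ℝ}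
    (hφ : ContDiff ℝ 2 φ) (hψ : ContDiff ℝ 2 ψ) (i : Fin d) (x : EuclideanSpace ℝ (Fin d)) :
    secondPartial (fun y => φ y * ψ y) i x =
      secondPartial φ i x * ψ x
        + 2 * (fderiv ℝ φ x (EuclideanSpace.single i 1) * fderiv ℝ ψ x (EuclideanSpace.single i 1))
        + φ x * secondPartial ψ i x := by
  have hφd := hφ.differentiable (by norm_num)
  have hψd := hψ.differentiable (by norm_num)
  have key : (fun y => fderiv ℝ (fun z => φ z * ψ z) y (EuclideanSpace.single i 1))
      = fun y => fderiv ℝ φ y (EuclideanSpace.single i 1) * ψ y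
          + φ y * fderiv ℝ ψ y (EuclideanSpace.single i 1) := by
    funext y
    exact fderiv_mul_apply' (hφd y) (hψd y) _
  unfold secondPartial
  rw [key, fderiv_fun_add ((diff_pd hφ _ x).fun_mul (hψd x)) ((hφd x).fun_mul (diff_pd hψ _ x)),
    ContinuousLinearMap.add_apply,
    fderiv_mul_apply' ((diff_pd hφ _) x) (hψd x) _,
    fderiv_mul_apply' (hφd x) ((diff_pd hψ _) x) _]
  ring

lemma secondPartial_mul_const {φ : EuclideanSpace ℝ (Fin d) → ℝ} (hφ : ContDiff ℝ 2 φ)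
    (c : ℝ) (i : Fin d) (x : EuclideanSpace ℝ (Fin d)) :
    secondPartial (fun y => φ y * c) i x = secondPartial φ i x * c := by
  have hφd := hφ.differentiable (by norm_num)
  have key : (fun y => fderiv ℝ (fun z => φ z * c) y (EuclideanSpace.single i 1))
      = fun y => fderiv ℝ φ y (EuclideanSpace.single i 1) * c := by
    funext y
    exact fderiv_mul_const_apply' (hφd y) c _
  unfold secondPartial
  rw [key]
  exact fderiv_mul_const_apply' ((diff_pd hφ _) x) c _

lemma clm_eval_sum (v : EuclideanSpace ℝ (Fin d)) (L : EuclideanSpace ℝ (Fin d) →L[ℝ] ℝ) :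
    L v = ∑ i, v i * L (EuclideanSpace.single i 1) := by
  have hv : v = ∑ i, (v i) • EuclideanSpace.single i (1:ℝ) := by
    have h : ∀ j, (∑ i, (v i) • EuclideanSpace.single i (1:ℝ)) j
        = ∑ i, ((v i) • EuclideanSpace.single i (1:ℝ)) j := fun j =>
      by rw [WithLp.ofLp_sum, Finset.sum_apply]
    ext j
    rw [h]
    simp [EuclideanSpace.single_apply]
  conv_lhs => rw [hv]
  rw [map_sum]
  simp [smul_eq_mul]

lemma inner_grad {φ : EuclideanSpace ℝ (Fin d) → ℝ} (x v : EuclideanSpace ℝ (Fin d)) :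
    ⟪v, gradient φ x⟫ = fderiv ℝ φ x v := by
  rw [real_inner_comm]
  unfold gradient
  exact InnerProductSpace.toDual_symm_apply

lemma gradient_coord {φ : EuclideanSpace ℝ (Fin d) → ℝ} (y : EuclideanSpace ℝ (Fin d))
    (i : Fin d) : gradient φ y i = fderiv ℝ φ y (EuclideanSpace.single i 1) := by
  have h : ⟪EuclideanSpace.single i (1:ℝ), gradient φ y⟫ = gradient φ y i := by
    rw [EuclideanSpace.inner_single_left]
    simp
  rw [← h, inner_grad]

end ForwardTilted

open ForwardTilted

/-- PDE verification in the paper's formal proof of Theorem 1: if `p` solves the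
Kolmogorov forward (Fokker–Planck) equation of the SDE with drift `f` and diffusion `σ`,
and a positive `w` solves the associated linear backward equation, then
`g := w·p/C` solves the forward equation of the SDE with drift `f + u`, where
`u := (σ²/w)·∇ₓw`. -/
theorem forward_equation_tilted {d : ℕ} (hd : 0 < d) (σ : ℝ → ℝ) (C : ℝ) (hC : 0 < C)
    (f : ℝ → EuclideanSpace ℝ (Fin d) → EuclideanSpace ℝ (Fin d))
    (p w : ℝ → EuclideanSpace ℝ (Fin d) → ℝ)
    (hf : ContDiff ℝ 2 (fun q : ℝ × EuclideanSpace ℝ (Fin d) => f q.1 q.2))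
    (hp : ContDiff ℝ 2 (fun q : ℝ × EuclideanSpace ℝ (Fin d) => p q.1 q.2))
    (hw : ContDiff ℝ 2 (fun q : ℝ × EuclideanSpace ℝ (Fin d) => w q.1 q.2))
    (hwpos : ∀ (t : ℝ) (x : EuclideanSpace ℝ (Fin d)), 0 < w t x)
    (hforward : ∀ (t : ℝ) (x : EuclideanSpace ℝ (Fin d)),
      deriv (fun s => p s x) t + diverg (fun y => p t y • f t y) x
        - (σ t) ^ 2 / 2 * lapl (p t) x = 0)
    (hbackward : ∀ (t : ℝ) (x : EuclideanSpace ℝ (Fin d)),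
      deriv (fun s => w s x) t + ⟪f t x, gradient (w t) x⟫
        + (σ t) ^ 2 / 2 * lapl (w t) x = 0)
    (u : ℝ → EuclideanSpace ℝ (Fin d) → EuclideanSpace ℝ (Fin d))
    (hu : ∀ t x, u t x = ((σ t) ^ 2 / w t x) • gradient (w t) x)
    (g : ℝ → EuclideanSpace ℝ (Fin d) → ℝ)
    (hg : ∀ t x, g t x = w t x * p t x / C) :
    ∀ (t : ℝ) (x : EuclideanSpace ℝ (Fin d)),
      deriv (fun s => g s x) t + diverg (fun y => g t y • (f t y + u t y)) x
        - (σ t) ^ 2 / 2 * lapl (g t) x = 0 := by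
  intro t x
  -- space slices are C²
  have hwt2 : ContDiff ℝ 2 (w t) := hw.comp (contDiff_const.prodMk contDiff_id)
  have hpt2 : ContDiff ℝ 2 (p t) := hp.comp (contDiff_const.prodMk contDiff_id)
  have hft2 : ContDiff ℝ 2 (f t) := hf.comp (contDiff_const.prodMk contDiff_id)
  have hFi : ∀ i : Fin d, ContDiff ℝ 2 (fun y => f t y i) := fun i =>
    (EuclideanSpace.proj i : EuclideanSpace ℝ (Fin d) →L[ℝ] ℝ).contDiff.comp hft2
  have hwd := hwt2.differentiable (by norm_num)
  have hpd := hpt2.differentiable (by norm_num)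
  have hFid : ∀ i, Differentiable ℝ (fun y => f t y i) := fun i =>
    (hFi i).differentiable (by norm_num)
  -- time slices are differentiable
  have hwxd : DifferentiableAt ℝ (fun s => w s x) t :=
    ((hw.comp (contDiff_id.prodMk contDiff_const)).differentiable (by norm_num)) t
  have hpxd : DifferentiableAt ℝ (fun s => p s x) t :=
    ((hp.comp (contDiff_id.prodMk contDiff_const)).differentiable (by norm_num)) t
  -- time derivative of g
  have hderiv : deriv (fun s => g s x) t
      = (deriv (fun s => w s x) t * p t x + w t x * deriv (fun s => p s x) t) / C := by
    have hgs : (fun s => g s x) = fun s => (w s x * p s x) / C := funext fun s => hg s x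
    rw [hgs, deriv_div_const, deriv_fun_mul hwxd hpxd]
  -- coordinates of the controlled drift field
  have hcoord : ∀ i : Fin d, (fun y => (g t y • (f t y + u t y)) i)
      = fun y => (w t y * p t y * C⁻¹) * f t y i
          + ((σ t) ^ 2 * p t y * C⁻¹) * fderiv ℝ (w t) y (EuclideanSpace.single i 1) := by
    intro i
    funext y
    have h0 : w t y ≠ 0 := (hwpos t y).ne'
    simp only [hg, hu, PiLp.smul_apply, PiLp.add_apply, smul_eq_mul, gradient_coord]
    field_simp
  -- per-coordinate derivative of the controlled flux
  have hterm : ∀ i : Fin d,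
      fderiv ℝ (fun y => (g t y • (f t y + u t y)) i) x (EuclideanSpace.single i 1)
      = p t x * C⁻¹ * (f t x i * fderiv ℝ (w t) x (EuclideanSpace.single i 1))
        + w t x * C⁻¹ * (f t x i * fderiv ℝ (p t) x (EuclideanSpace.single i 1))
        + w t x * p t x * C⁻¹ * fderiv ℝ (fun y => f t y i) x (EuclideanSpace.single i 1)
        + (σ t) ^ 2 * C⁻¹ * (fderiv ℝ (w t) x (EuclideanSpace.single i 1)
            * fderiv ℝ (p t) x (EuclideanSpace.single i 1))
        + (σ t) ^ 2 * p t x * C⁻¹ * secondPartial (w t) i x := by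
    intro i
    have d1 : DifferentiableAt ℝ (fun y => w t y * p t y * C⁻¹) x :=
      ((hwd x).mul (hpd x)).mul_const _
    have d2 : DifferentiableAt ℝ (fun y => (σ t) ^ 2 * p t y * C⁻¹) x :=
      ((differentiableAt_const _).mul (hpd x)).mul_const _
    have d3 : DifferentiableAt ℝ (fun y => fderiv ℝ (w t) y (EuclideanSpace.single i 1)) x :=
      (diff_pd hwt2 _) x
    rw [hcoord i,
      fderiv_fun_add (d1.fun_mul (hFid i x)) (d2.fun_mul d3), ContinuousLinearMap.add_apply,
      fderiv_mul_apply' d1 (hFid i x) _,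
      fderiv_mul_apply' d2 d3 _,
      fderiv_mul_const_apply' ((hwd x).fun_mul (hpd x)) C⁻¹ _,
      fderiv_mul_apply' (hwd x) (hpd x) _,
      fderiv_mul_const_apply' ((differentiableAt_const _).fun_mul (hpd x)) C⁻¹ _,
      fderiv_const_mul_apply' (hpd x) ((σ t) ^ 2) _]
    rw [show fderiv ℝ (fun y => fderiv ℝ (w t) y (EuclideanSpace.single i 1)) x
        (EuclideanSpace.single i 1) = secondPartial (w t) i x from rfl]
    ring
  -- divergence of the controlled flux
  have hdiv : diverg (fun y => g t y • (f t y + u t y)) x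
      = p t x * C⁻¹ * (∑ i, f t x i * fderiv ℝ (w t) x (EuclideanSpace.single i 1))
        + w t x * C⁻¹ * (∑ i, f t x i * fderiv ℝ (p t) x (EuclideanSpace.single i 1))
        + w t x * p t x * C⁻¹
            * (∑ i, fderiv ℝ (fun y => f t y i) x (EuclideanSpace.single i 1))
        + (σ t) ^ 2 * C⁻¹ * (∑ i, fderiv ℝ (w t) x (EuclideanSpace.single i 1)
            * fderiv ℝ (p t) x (EuclideanSpace.single i 1))
        + (σ t) ^ 2 * p t x * C⁻¹ * (∑ i, secondPartial (w t) i x) := by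
    unfold diverg
    rw [Finset.sum_congr rfl fun i _ => hterm i]
    simp only [Finset.sum_add_distrib, ← Finset.mul_sum]
  -- Laplacian of g t
  have hgt : g t = fun y => (w t y * p t y) * C⁻¹ := funext fun y => by
    rw [hg]; ring
  have hlterm : ∀ i : Fin d, secondPartial (g t) i x
      = p t x * C⁻¹ * secondPartial (w t) i x
        + 2 * C⁻¹ * (fderiv ℝ (w t) x (EuclideanSpace.single i 1)
            * fderiv ℝ (p t) x (EuclideanSpace.single i 1))
        + w t x * C⁻¹ * secondPartial (p t) i x := by
    intro i
    rw [hgt, secondPartial_mul_const (hwt2.mul hpt2) C⁻¹ i x, secondPartial_mul hwt2 hpt2 i x]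
    ring
  have hlapl : lapl (g t) x
      = p t x * C⁻¹ * (∑ i, secondPartial (w t) i x)
        + 2 * C⁻¹ * (∑ i, fderiv ℝ (w t) x (EuclideanSpace.single i 1)
            * fderiv ℝ (p t) x (EuclideanSpace.single i 1))
        + w t x * C⁻¹ * (∑ i, secondPartial (p t) i x) := by
    unfold lapl
    rw [Finset.sum_congr rfl fun i _ => hlterm i]
    simp only [Finset.sum_add_distrib, ← Finset.mul_sum]
  -- rewrite the forward equation
  have hfterm : ∀ i : Fin d,
      fderiv ℝ (fun y => (p t y • f t y) i) x (EuclideanSpace.single i 1)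
      = f t x i * fderiv ℝ (p t) x (EuclideanSpace.single i 1)
        + p t x * fderiv ℝ (fun y => f t y i) x (EuclideanSpace.single i 1) := by
    intro i
    have hc : (fun y => (p t y • f t y) i) = fun y => p t y * f t y i := by
      funext y
      simp [PiLp.smul_apply]
    rw [hc, fderiv_mul_apply' (hpd x) (hFid i x) _]
    ring
  have HF := hforward t x
  have hfsum : diverg (fun y => p t y • f t y) x
      = (∑ i, f t x i * fderiv ℝ (p t) x (EuclideanSpace.single i 1))
        + p t x * (∑ i, fderiv ℝ (fun y => f t y i) x (EuclideanSpace.single i 1)) := by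
    unfold diverg
    rw [Finset.sum_congr rfl fun i _ => hfterm i]
    simp only [Finset.sum_add_distrib, ← Finset.mul_sum]
  rw [hfsum] at HF
  unfold lapl at HF
  -- rewrite the backward equation
  have HB := hbackward t x
  have hbsum : ⟪f t x, gradient (w t) x⟫
      = ∑ i, f t x i * fderiv ℝ (w t) x (EuclideanSpace.single i 1) := by
    rw [inner_grad]
    exact clm_eval_sum (f t x) (fderiv ℝ (w t) x)
  rw [hbsum] at HB
  unfold lapl at HB
  -- combine
  rw [hderiv, hdiv, hlapl]
  linear_combination (p t x / C) * HB + (w t x / C) * HF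
end
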